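/- For the simple symmetric random walk with edge local times U_{n,r}, for every integers n ≥ 1 and u ≥ 0: Σ_{r=1}^∞ P[U_{n-1,r} = u, R_n = r, V_n = -1] equals 0 when u is even and equals 2^(-n)·C(n-1, ⌊(n+u)/2⌋) when u is odd; and Σ_{r=1}^∞ P[U_{n-1,r} = u, R_n = r, V_n = 1] equals 2^(-n)·C(n-1, ⌊(n+u)/2⌋) when u is even and 0 when u is odd. -/

import Mathlib

def myc (m u : ℕ) (d : ℤ) : ℕ :=
  if u = 0 then
    (if d < 0 then ∑ i ∈ Finset.range (-d).toNat, m.choose ((m + i + 1) / 2) else 0)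
  else if Even u then
    (if d < 0 then m.choose ((m + u + (-d).toNat) / 2) else 0)
  else
    (if 0 ≤ d then m.choose ((m + u + 1 + d.toNat) / 2) else 0)

lemma myc_zero_neg (m : ℕ) {d : ℤ} (hd : d < 0) :
    myc m 0 d = ∑ i ∈ Finset.range (-d).toNat, m.choose ((m + i + 1) / 2) := by
  simp [myc, hd]

lemma myc_zero_nonneg (m : ℕ) {d : ℤ} (hd : 0 ≤ d) : myc m 0 d = 0 := by
  simp [myc, not_lt.mpr hd]

lemma myc_even_neg (m : ℕ) {u : ℕ} (hu : u ≠ 0) (he : Even u) {d : ℤ} (hd : d < 0) :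
    myc m u d = m.choose ((m + u + (-d).toNat) / 2) := by
  simp [myc, hu, he, hd]

lemma myc_even_nonneg (m : ℕ) {u : ℕ} (he : Even u) {d : ℤ} (hd : 0 ≤ d) : myc m u d = 0 := by
  by_cases hu : u = 0
  · subst hu; simp [myc, not_lt.mpr hd]
  · simp [myc, hu, he, not_lt.mpr hd]

lemma myc_odd_nonneg (m : ℕ) {u : ℕ} (ho : ¬ Even u) {d : ℤ} (hd : 0 ≤ d) :
    myc m u d = m.choose ((m + u + 1 + d.toNat) / 2) := by
  have hu : u ≠ 0 := by rintro rfl; exact ho Even.zero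
  simp [myc, hu, ho, hd]

lemma myc_odd_neg (m : ℕ) {u : ℕ} (ho : ¬ Even u) {d : ℤ} (hd : d < 0) : myc m u d = 0 := by
  have hu : u ≠ 0 := by rintro rfl; exact ho Even.zero
  simp [myc, hu, ho, not_le.mpr hd]

lemma choose_half (m : ℕ) : m.choose ((m + 1) / 2) = m.choose (m / 2) := by
  rcases Nat.eq_zero_or_pos m with h | h
  · subst h; rfl
  · have h1 : (m + 1) / 2 ≤ m := by omega
    have h2 : m - (m + 1) / 2 = m / 2 := by omega
    rw [← Nat.choose_symm h1, h2]

lemma pascal (m k : ℕ) : (m + 1).choose (k + 1) = m.choose k + m.choose (k + 1) :=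
  Nat.choose_succ_succ m k

lemma myc_rec (m u : ℕ) (d : ℤ) :
    myc (m + 1) u d =
      (if d = 0 then (if u = 0 then 0 else myc m (u - 1) (-1)) else myc m u (d - 1)) +
      (if d = -1 then (if u = 0 then 0 else myc m (u - 1) 0) else myc m u (d + 1)) := by
  by_cases hu : u = 0
  · subst hu
    simp only [reduceIte]
    by_cases hd : d < 0
    · have hd0 : ¬ d = 0 := by omega
      set j := (-d).toNat with hj
      have hj1 : 1 ≤ j := by omega
      rw [if_neg hd0, myc_zero_neg _ hd, myc_zero_neg _ (show d - 1 < 0 by omega),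
        (show (-(d-1)).toNat = j + 1 by omega)]
      have hT2 : (if d = -1 then 0 else myc m 0 (d + 1))
          = ∑ i ∈ Finset.range (j - 1), m.choose ((m + i + 1) / 2) := by
        by_cases hd1 : d = -1
        · rw [if_pos hd1, (show j - 1 = 0 by omega)]; simp
        · rw [if_neg hd1, myc_zero_neg _ (show d + 1 < 0 by omega),
            (show (-(d+1)).toNat = j - 1 by omega)]
      rw [hT2]
      have hLHS : ∑ i ∈ Finset.range j, (m+1).choose ((m + 1 + i + 1) / 2)
          = (∑ i ∈ Finset.range j, m.choose ((m + i) / 2))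
            + ∑ i ∈ Finset.range j, m.choose ((m + i) / 2 + 1) := by
        rw [← Finset.sum_add_distrib]
        refine Finset.sum_congr rfl fun i _ => ?_
        rw [(show (m + 1 + i + 1) / 2 = (m + i) / 2 + 1 by omega), pascal]
      have hS1 : ∑ i ∈ Finset.range j, m.choose ((m + i) / 2)
          = (∑ i ∈ Finset.range (j-1), m.choose ((m + i + 1) / 2)) + m.choose (m / 2) := by
        have h := Finset.sum_range_succ' (fun i => m.choose ((m + i) / 2)) (j - 1)
        rw [(show j - 1 + 1 = j by omega)] at h
        rw [h]
        rfl
      have hT1 : ∑ i ∈ Finset.range (j+1), m.choose ((m + i + 1) / 2)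
          = (∑ i ∈ Finset.range j, m.choose ((m + i) / 2 + 1)) + m.choose ((m+1) / 2) := by
        rw [Finset.sum_range_succ']
        congr 1
        exact Finset.sum_congr rfl fun i _ => by congr 1; omega
      rw [hLHS, hS1, hT1, choose_half]
      ring
    · push_neg at hd
      rw [myc_zero_nonneg _ hd]
      by_cases hd0 : d = 0
      · rw [if_pos hd0, if_neg (show ¬ d = -1 by omega),
          myc_zero_nonneg _ (show (0:ℤ) ≤ d + 1 by omega)]
      · rw [if_neg hd0, if_neg (show ¬ d = -1 by omega),
          myc_zero_nonneg _ (show (0:ℤ) ≤ d - 1 by omega),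
          myc_zero_nonneg _ (show (0:ℤ) ≤ d + 1 by omega)]
  · by_cases he : Even u
    · -- u even, u ≥ 2
      have hu2 : 2 ≤ u := by obtain ⟨k, hk⟩ := he; omega
      have hu1odd : ¬ Even (u - 1) := by
        obtain ⟨k, hk⟩ := he; rintro ⟨l, hl⟩; omega
      by_cases hd : d < 0
      · have hd0 : ¬ d = 0 := by omega
        set j := (-d).toNat with hj
        have hj1 : 1 ≤ j := by omega
        rw [if_neg hd0, myc_even_neg _ hu he hd, myc_even_neg _ hu he (show d - 1 < 0 by omega),
          (show (m + 1 + u + (-d).toNat) / 2 = (m + u + (j-1)) / 2 + 1 by omega),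
          (show (m + u + (-(d-1)).toNat) / 2 = (m + u + (j-1)) / 2 + 1 by omega), pascal]
        by_cases hd1 : d = -1
        · rw [if_pos hd1, if_neg hu, myc_odd_nonneg _ hu1odd le_rfl]
          rw [(show (m + (u-1) + 1 + (0:ℤ).toNat) / 2 = (m + u + (j-1)) / 2 by omega)]
          ring
        · rw [if_neg hd1, myc_even_neg _ hu he (show d + 1 < 0 by omega),
            (show (m + u + (-(d+1)).toNat) / 2 = (m + u + (j-1)) / 2 by omega)]
          ring
      · push_neg at hd
        rw [myc_even_nonneg _ he hd]
        by_cases hd0 : d = 0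
        · rw [if_pos hd0, if_neg hu, myc_odd_neg _ hu1odd (show (-1:ℤ) < 0 by norm_num),
            if_neg (show ¬ d = -1 by omega), myc_even_nonneg _ he (show (0:ℤ) ≤ d + 1 by omega)]
        · rw [if_neg hd0, if_neg (show ¬ d = -1 by omega),
            myc_even_nonneg _ he (show (0:ℤ) ≤ d - 1 by omega),
            myc_even_nonneg _ he (show (0:ℤ) ≤ d + 1 by omega)]
    · -- u odd
      have hu1even : Even (u - 1) := by
        rcases Nat.even_or_odd u with h | h
        · exact absurd h he
        · obtain ⟨k, hk⟩ := h; exact ⟨k, by omega⟩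
      by_cases hd : 0 ≤ d
      · set e := d.toNat with he'
        rw [myc_odd_nonneg _ he hd, if_neg (show ¬ d = -1 by omega),
          myc_odd_nonneg _ he (show (0:ℤ) ≤ d + 1 by omega),
          (show (m + 1 + u + 1 + d.toNat) / 2 = (m + u + e) / 2 + 1 by omega),
          (show (m + u + 1 + (d+1).toNat) / 2 = (m + u + e) / 2 + 1 by omega), pascal]
        by_cases hd0 : d = 0
        · rw [if_pos hd0]
          have he0 : e = 0 := by omega
          by_cases hu1 : u - 1 = 0
          · have hu' : u = 1 := by omega
            rw [if_neg hu, hu1, myc_zero_neg _ (show (-1:ℤ) < 0 by norm_num),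
              (show (-(-1:ℤ)).toNat = 1 by norm_num)]
            simp only [Finset.range_one, Finset.sum_singleton]
            congr 2
            omega
          · rw [if_neg hu, myc_even_neg _ hu1 hu1even (show (-1:ℤ) < 0 by norm_num)]
            congr 2
            omega
        · rw [if_neg hd0, myc_odd_nonneg _ he (show (0:ℤ) ≤ d - 1 by omega)]
          congr 2
          omega
      · push_neg at hd
        rw [myc_odd_neg _ he hd]
        by_cases hd1 : d = -1
        · rw [if_neg (show ¬ d = 0 by omega), myc_odd_neg _ he (show d - 1 < 0 by omega),
            if_pos hd1, if_neg hu]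
          by_cases hu1 : u - 1 = 0
          · rw [hu1, myc_zero_nonneg _ le_rfl]
          · rw [myc_even_nonneg _ hu1even le_rfl]
        · rw [if_neg (show ¬ d = 0 by omega), myc_odd_neg _ he (show d - 1 < 0 by omega),
            if_neg hd1, myc_odd_neg _ he (show d + 1 < 0 by omega)]

lemma myc_rec' (m u : ℕ) (d : ℤ) :
    myc (m + 1) u d =
      (if d = 0 then (if u = 0 then 0 else myc m (u - 1) (d - 1)) else myc m u (d - 1)) +
      (if d = -1 then (if u = 0 then 0 else myc m (u - 1) (d + 1)) else myc m u (d + 1)) := by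
  rw [myc_rec]
  by_cases hd0 : d = 0
  · subst hd0; norm_num
  · rw [if_neg hd0, if_neg hd0]
    by_cases hd1 : d = -1
    · subst hd1; norm_num
    · rw [if_neg hd1, if_neg hd1]

open MeasureTheory ProbabilityTheory

/-- Refinement of the current-edge local time probability by the direction of the
`n`-th step: the series `Σ_{r≥1} P[U_{n-1,r} = u, R_n = r, V_n = ∓1]` vanishes
according to the parity of `u`, and otherwise equals `2^(-n)·C(n-1, ⌊(n+u)/2⌋)`. -/
theorem stmt8
    {Ω : Type*} [MeasurableSpace Ω] (P : Measure Ω) [IsProbabilityMeasure P]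
    (V : ℕ → Ω → ℤ)
    (hVmeas : ∀ n, Measurable (V n))
    (hVval : ∀ n ω, V n ω = 1 ∨ V n ω = -1)
    (hVfair : ∀ n, P {ω | V n ω = 1} = 1 / 2)
    (hVindep : iIndepFun V P)
    (S : ℕ → Ω → ℤ) (hS : ∀ n ω, S n ω = ∑ k ∈ Finset.Icc 1 n, V k ω)
    (R : ℕ → Ω → ℤ) (hR : ∀ n ω, R n ω = (1 + S (n - 1) ω + S n ω) / 2)
    (U : ℕ → ℤ → Ω → ℕ)
    (hU : ∀ n r ω, U n r ω = ∑ k ∈ Finset.Icc 1 n, if R k ω = r then 1 else 0) :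
    ∀ n : ℕ, 1 ≤ n → ∀ u : ℕ,
      (∑' r : ℕ,
          P {ω | U (n - 1) ((r : ℤ) + 1) ω = u ∧ R n ω = (r : ℤ) + 1 ∧ V n ω = -1}) =
        (if Even u then 0 else ((n - 1).choose ((n + u) / 2) : ENNReal) / 2 ^ n) ∧
      (∑' r : ℕ,
          P {ω | U (n - 1) ((r : ℤ) + 1) ω = u ∧ R n ω = (r : ℤ) + 1 ∧ V n ω = 1}) =
        (if Even u then ((n - 1).choose ((n + u) / 2) : ENNReal) / 2 ^ n else 0) := by
  classical
  have hS0 : ∀ ω, S 0 ω = 0 := fun ω => by rw [hS]; simp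
  have hU0 : ∀ r ω, U 0 r ω = 0 := fun r ω => by rw [hU]; simp
  have hSsucc : ∀ m ω, S (m + 1) ω = S m ω + V (m + 1) ω := fun m ω => by
    rw [hS, hS, Finset.sum_Icc_succ_top (by omega : 1 ≤ m + 1)]
  have hUsucc : ∀ m (r : ℤ) ω, U (m + 1) r ω
      = U m r ω + (if R (m + 1) ω = r then 1 else 0) := fun m r ω => by
    rw [hU, hU, Finset.sum_Icc_succ_top (by omega : 1 ≤ m + 1)]
  have hRsucc : ∀ m ω, R (m + 1) ω = (1 + S m ω + S (m + 1) ω) / 2 := fun m ω => by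
    have := hR (m + 1) ω
    simpa using this
  have hRpos : ∀ m ω, V (m + 1) ω = 1 → R (m + 1) ω = S m ω + 1 := by
    intro m ω hV
    have h2 := hSsucc m ω
    rw [hRsucc, h2, hV]
    omega
  have hRneg : ∀ m ω, V (m + 1) ω = -1 → R (m + 1) ω = S m ω := by
    intro m ω hV
    have h2 := hSsucc m ω
    rw [hRsucc, h2, hV]
    omega
  -- the tuple of the first m steps
  have hWmeas : ∀ m, Measurable (fun ω (i : (Finset.Icc 1 m : Finset ℕ)) => V i ω) :=
    fun m => measurable_pi_lambda _ (fun i => hVmeas i)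
  have hindep : ∀ m, IndepFun (fun ω (i : (Finset.Icc 1 m : Finset ℕ)) => V i ω) (V (m + 1)) P := by
    intro m
    have h := hVindep.indepFun_finset (Finset.Icc 1 m) {m + 1}
      (by simp [Finset.disjoint_singleton_right]) hVmeas
    have h2 : V (m + 1) = (fun g : (({m + 1} : Finset ℕ) : Finset ℕ) → ℤ =>
        g ⟨m + 1, Finset.mem_singleton_self _⟩) ∘ (fun ω (i : ({m + 1} : Finset ℕ)) => V i ω) :=
      rfl
    rw [h2]
    exact h.comp measurable_id (measurable_pi_apply _)
  have hrep : ∀ m (u : ℕ) (rr s : ℤ), ∃ B : Set ((Finset.Icc 1 m : Finset ℕ) → ℤ),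
      {ω | U m rr ω = u ∧ S m ω = s}
        = (fun ω (i : (Finset.Icc 1 m : Finset ℕ)) => V i ω) ⁻¹' B := by
    intro m u rr s
    set F : ((Finset.Icc 1 m : Finset ℕ) → ℤ) → ℕ → ℤ :=
      fun x k => ∑ j ∈ Finset.Icc 1 k, (if h : j ∈ Finset.Icc 1 m then x ⟨j, h⟩ else 0) with hF
    refine ⟨{x | (∑ k ∈ Finset.Icc 1 m,
        if ((1 + F x (k - 1) + F x k) / 2 : ℤ) = rr then 1 else 0) = u ∧ F x m = s}, ?_⟩
    ext ω
    simp only [Set.mem_setOf_eq, Set.mem_preimage]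
    have hFk : ∀ k, k ≤ m → F (fun i : (Finset.Icc 1 m : Finset ℕ) => V i ω) k = S k ω := by
      intro k hk
      rw [hS, hF]
      refine Finset.sum_congr rfl fun j hj => ?_
      have hjm : j ∈ Finset.Icc 1 m := by
        simp only [Finset.mem_Icc] at hj ⊢
        omega
      rw [dif_pos hjm]
    have hUU : (∑ k ∈ Finset.Icc 1 m,
        if ((1 + F (fun i : (Finset.Icc 1 m : Finset ℕ) => V i ω) (k - 1)
          + F (fun i : (Finset.Icc 1 m : Finset ℕ) => V i ω) k) / 2 : ℤ) = rr then 1 else 0)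
        = U m rr ω := by
      rw [hU]
      refine Finset.sum_congr rfl fun k hk => ?_
      simp only [Finset.mem_Icc] at hk
      rw [hFk (k - 1) (by omega), hFk k (by omega), hR]
    rw [hUU, hFk m le_rfl]
  have hmeasA : ∀ m (u : ℕ) (rr s : ℤ), MeasurableSet {ω | U m rr ω = u ∧ S m ω = s} := by
    intro m u rr s
    obtain ⟨B, hB⟩ := hrep m u rr s
    rw [hB]
    exact (hWmeas m) MeasurableSet.of_discrete
  have hsplit : ∀ m (u : ℕ) (rr s e : ℤ),
      P ({ω | U m rr ω = u ∧ S m ω = s} ∩ {ω | V (m + 1) ω = e})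
        = P {ω | U m rr ω = u ∧ S m ω = s} * P {ω | V (m + 1) ω = e} := by
    intro m u rr s e
    obtain ⟨B, hB⟩ := hrep m u rr s
    rw [hB, show {ω | V (m + 1) ω = e} = V (m + 1) ⁻¹' {e} from rfl]
    exact (hindep m).measure_inter_preimage_eq_mul _ _ MeasurableSet.of_discrete
      (measurableSet_singleton e)
  have hVpos : ∀ n, P {ω | V n ω = 1} = 2⁻¹ := by
    intro n; rw [hVfair n, one_div]
  have hVneg : ∀ n, P {ω | V n ω = -1} = 2⁻¹ := by
    intro n
    have hc : {ω | V n ω = -1} = {ω | V n ω = 1}ᶜ := by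
      ext ω
      simp only [Set.mem_setOf_eq, Set.mem_compl_iff]
      rcases hVval n ω with h | h <;> simp [h]
    have hm : MeasurableSet {ω | V n ω = 1} := (hVmeas n) (measurableSet_singleton 1)
    rw [hc, prob_compl_eq_one_sub hm, hVpos n]
    rw [ENNReal.one_sub_inv_two]
  have hstep : ∀ m (u : ℕ) (rr d : ℤ),
      P {ω | U (m + 1) rr ω = u ∧ S (m + 1) ω = rr + d} =
      ((if d = 0 then (if u = 0 then 0
            else P {ω | U m rr ω = u - 1 ∧ S m ω = rr + (d - 1)})
          else P {ω | U m rr ω = u ∧ S m ω = rr + (d - 1)})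
        + (if d = -1 then (if u = 0 then 0
            else P {ω | U m rr ω = u - 1 ∧ S m ω = rr + (d + 1)})
          else P {ω | U m rr ω = u ∧ S m ω = rr + (d + 1)})) * 2⁻¹ := by
    intro m u rr d
    set A := {ω | U (m + 1) rr ω = u ∧ S (m + 1) ω = rr + d} with hA
    have hmE : MeasurableSet {ω | V (m + 1) ω = 1} := (hVmeas (m + 1)) (measurableSet_singleton 1)
    have hsplitA : P A = P (A ∩ {ω | V (m + 1) ω = 1}) + P (A ∩ {ω | V (m + 1) ω = -1}) := by
      rw [← measure_inter_add_diff A hmE]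
      congr 1
      congr 1
      ext ω
      simp only [Set.mem_diff, Set.mem_inter_iff, Set.mem_setOf_eq]
      rcases hVval (m + 1) ω with h | h <;> simp [h]
    have hpos : A ∩ {ω | V (m + 1) ω = 1}
        = {ω | U m rr ω + (if S m ω + 1 = rr then 1 else 0) = u ∧ S m ω = rr + (d - 1)}
          ∩ {ω | V (m + 1) ω = 1} := by
      ext ω
      simp only [Set.mem_inter_iff, Set.mem_setOf_eq, hA]
      constructor
      · rintro ⟨⟨h1, h2⟩, hV⟩
        rw [hUsucc, hRpos m ω hV] at h1
        have hs := hSsucc m ω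
        rw [hV] at hs
        exact ⟨⟨h1, by omega⟩, hV⟩
      · rintro ⟨⟨h1, h2⟩, hV⟩
        have hs := hSsucc m ω
        rw [hV] at hs
        refine ⟨⟨?_, by omega⟩, hV⟩
        rw [hUsucc, hRpos m ω hV]
        exact h1
    have hneg : A ∩ {ω | V (m + 1) ω = -1}
        = {ω | U m rr ω + (if S m ω = rr then 1 else 0) = u ∧ S m ω = rr + (d + 1)}
          ∩ {ω | V (m + 1) ω = -1} := by
      ext ω
      simp only [Set.mem_inter_iff, Set.mem_setOf_eq, hA]
      constructor
      · rintro ⟨⟨h1, h2⟩, hV⟩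
        rw [hUsucc, hRneg m ω hV] at h1
        have hs := hSsucc m ω
        rw [hV] at hs
        exact ⟨⟨h1, by omega⟩, hV⟩
      · rintro ⟨⟨h1, h2⟩, hV⟩
        have hs := hSsucc m ω
        rw [hV] at hs
        refine ⟨⟨?_, by omega⟩, hV⟩
        rw [hUsucc, hRneg m ω hV]
        exact h1
    have hP1 : P (A ∩ {ω | V (m + 1) ω = 1})
        = (if d = 0 then (if u = 0 then 0
            else P {ω | U m rr ω = u - 1 ∧ S m ω = rr + (d - 1)})
          else P {ω | U m rr ω = u ∧ S m ω = rr + (d - 1)}) * 2⁻¹ := by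
      rw [hpos]
      by_cases hd0 : d = 0
      · by_cases hu0 : u = 0
        · rw [if_pos hd0, if_pos hu0]
          have he : {ω | U m rr ω + (if S m ω + 1 = rr then 1 else 0) = u
              ∧ S m ω = rr + (d - 1)} = (∅ : Set Ω) := by
            ext ω
            simp only [Set.mem_setOf_eq, Set.mem_empty_iff_false, iff_false, not_and]
            intro h1 h2
            rw [if_pos (by omega : S m ω + 1 = rr)] at h1
            omega
          rw [he]
          simp
        · rw [if_pos hd0, if_neg hu0]
          have he : {ω | U m rr ω + (if S m ω + 1 = rr then 1 else 0) = u
              ∧ S m ω = rr + (d - 1)}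
              = {ω | U m rr ω = u - 1 ∧ S m ω = rr + (d - 1)} := by
            ext ω
            simp only [Set.mem_setOf_eq]
            constructor
            · rintro ⟨h1, h2⟩
              rw [if_pos (by omega : S m ω + 1 = rr)] at h1
              exact ⟨by omega, h2⟩
            · rintro ⟨h1, h2⟩
              rw [if_pos (by omega : S m ω + 1 = rr)]
              exact ⟨by omega, h2⟩
          rw [he, hsplit m (u - 1) rr (rr + (d - 1)) 1, hVpos]
      · rw [if_neg hd0]
        have he : {ω | U m rr ω + (if S m ω + 1 = rr then 1 else 0) = u
            ∧ S m ω = rr + (d - 1)}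
            = {ω | U m rr ω = u ∧ S m ω = rr + (d - 1)} := by
          ext ω
          simp only [Set.mem_setOf_eq]
          constructor
          · rintro ⟨h1, h2⟩
            rw [if_neg (by omega : ¬ (S m ω + 1 = rr))] at h1
            exact ⟨by omega, h2⟩
          · rintro ⟨h1, h2⟩
            rw [if_neg (by omega : ¬ (S m ω + 1 = rr))]
            exact ⟨by omega, h2⟩
        rw [he, hsplit m u rr (rr + (d - 1)) 1, hVpos]
    have hP2 : P (A ∩ {ω | V (m + 1) ω = -1})
        = (if d = -1 then (if u = 0 then 0
            else P {ω | U m rr ω = u - 1 ∧ S m ω = rr + (d + 1)})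
          else P {ω | U m rr ω = u ∧ S m ω = rr + (d + 1)}) * 2⁻¹ := by
      rw [hneg]
      by_cases hd0 : d = -1
      · by_cases hu0 : u = 0
        · rw [if_pos hd0, if_pos hu0]
          have he : {ω | U m rr ω + (if S m ω = rr then 1 else 0) = u
              ∧ S m ω = rr + (d + 1)} = (∅ : Set Ω) := by
            ext ω
            simp only [Set.mem_setOf_eq, Set.mem_empty_iff_false, iff_false, not_and]
            intro h1 h2
            rw [if_pos (by omega : S m ω = rr)] at h1
            omega
          rw [he]
          simp
        · rw [if_pos hd0, if_neg hu0]
          have he : {ω | U m rr ω + (if S m ω = rr then 1 else 0) = u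
              ∧ S m ω = rr + (d + 1)}
              = {ω | U m rr ω = u - 1 ∧ S m ω = rr + (d + 1)} := by
            ext ω
            simp only [Set.mem_setOf_eq]
            constructor
            · rintro ⟨h1, h2⟩
              rw [if_pos (by omega : S m ω = rr)] at h1
              exact ⟨by omega, h2⟩
            · rintro ⟨h1, h2⟩
              rw [if_pos (by omega : S m ω = rr)]
              exact ⟨by omega, h2⟩
          rw [he, hsplit m (u - 1) rr (rr + (d + 1)) (-1), hVneg]
      · rw [if_neg hd0]
        have he : {ω | U m rr ω + (if S m ω = rr then 1 else 0) = u
            ∧ S m ω = rr + (d + 1)}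
            = {ω | U m rr ω = u ∧ S m ω = rr + (d + 1)} := by
          ext ω
          simp only [Set.mem_setOf_eq]
          constructor
          · rintro ⟨h1, h2⟩
            rw [if_neg (by omega : ¬ (S m ω = rr))] at h1
            exact ⟨by omega, h2⟩
          · rintro ⟨h1, h2⟩
            rw [if_neg (by omega : ¬ (S m ω = rr))]
            exact ⟨by omega, h2⟩
        rw [he, hsplit m u rr (rr + (d + 1)) (-1), hVneg]
    rw [hsplitA, hP1, hP2, add_mul]
  -- base case of the induction
  have hbase : ∀ (u : ℕ) (d : ℤ),
      (∑' r : ℕ, P {ω | U 0 ((r : ℤ) + 1) ω = u ∧ S 0 ω = ((r : ℤ) + 1) + d})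
        = (myc 0 u d : ENNReal) * 2⁻¹ ^ 0 := by
    intro u d
    have hev : ∀ r : ℕ, {ω | U 0 ((r : ℤ) + 1) ω = u ∧ S 0 ω = ((r : ℤ) + 1) + d}
        = (if u = 0 ∧ ((r : ℤ) + 1) + d = 0 then (Set.univ : Set Ω) else ∅) := by
      intro r
      ext ω
      simp only [Set.mem_setOf_eq, hU0, hS0]
      by_cases h : u = 0 ∧ ((r : ℤ) + 1) + d = 0
      · rw [if_pos h]
        simp only [Set.mem_univ, iff_true]
        exact ⟨h.1.symm, h.2.symm⟩
      · rw [if_neg h]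
        simp only [Set.mem_empty_iff_false, iff_false]
        rintro ⟨h1, h2⟩
        exact h ⟨h1.symm, h2.symm⟩
    have hPev : ∀ r : ℕ, P {ω | U 0 ((r : ℤ) + 1) ω = u ∧ S 0 ω = ((r : ℤ) + 1) + d}
        = (if u = 0 ∧ ((r : ℤ) + 1) + d = 0 then 1 else 0) := by
      intro r
      rw [hev r]
      by_cases h : u = 0 ∧ ((r : ℤ) + 1) + d = 0
      · rw [if_pos h, if_pos h, measure_univ]
      · rw [if_neg h, if_neg h, measure_empty]
    rw [tsum_congr hPev, pow_zero, mul_one]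
    by_cases hu0 : u = 0
    · subst hu0
      by_cases hd : d < 0
      · rw [myc_zero_neg _ hd]
        have hr0 : ((-d - 1).toNat : ℤ) + 1 + d = 0 := by omega
        rw [tsum_eq_single (-d - 1).toNat]
        · rw [if_pos ⟨rfl, by omega⟩]
          have : ∑ i ∈ Finset.range (-d).toNat, Nat.choose 0 ((0 + i + 1) / 2) = 1 := by
            rw [Finset.sum_eq_single_of_mem 0 (Finset.mem_range.mpr (by omega))]
            · norm_num
            · intro i _ hi
              exact Nat.choose_eq_zero_of_lt (by omega)
          rw [this]
          norm_num
        · intro r hr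
          rw [if_neg]
          rintro ⟨-, h2⟩
          apply hr
          omega
      · push_neg at hd
        rw [myc_zero_nonneg _ hd]
        have : ∀ r : ℕ, (if (0:ℕ) = 0 ∧ ((r : ℤ) + 1) + d = 0 then (1:ENNReal) else 0) = 0 := by
          intro r
          rw [if_neg]
          rintro ⟨-, h2⟩
          omega
        rw [tsum_congr this, tsum_zero]
        norm_num
    · have : ∀ r : ℕ, (if u = 0 ∧ ((r : ℤ) + 1) + d = 0 then (1:ENNReal) else 0) = 0 := by
        intro r
        rw [if_neg]
        rintro ⟨h1, -⟩
        exact hu0 h1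
      rw [tsum_congr this, tsum_zero]
      by_cases he : Even u
      · by_cases hd : d < 0
        · rw [myc_even_neg _ hu0 he hd]
          have hu2 : 2 ≤ u := by obtain ⟨k, hk⟩ := he; omega
          rw [Nat.choose_eq_zero_of_lt (by omega)]
          norm_num
        · push_neg at hd
          rw [myc_even_nonneg _ he hd]
          norm_num
      · by_cases hd : 0 ≤ d
        · rw [myc_odd_nonneg _ he hd]
          rw [Nat.choose_eq_zero_of_lt (by omega)]
          norm_num
        · push_neg at hd
          rw [myc_odd_neg _ he hd]
          norm_num
  -- the main induction
  have hkey : ∀ m (u : ℕ) (d : ℤ),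
      (∑' r : ℕ, P {ω | U m ((r : ℤ) + 1) ω = u ∧ S m ω = ((r : ℤ) + 1) + d})
        = (myc m u d : ENNReal) * 2⁻¹ ^ m := by
    intro m
    induction m with
    | zero => exact hbase
    | succ m ih =>
      intro u d
      have h1 : (∑' r : ℕ, P {ω | U (m + 1) ((r : ℤ) + 1) ω = u
            ∧ S (m + 1) ω = ((r : ℤ) + 1) + d})
          = ∑' r : ℕ,
            ((if d = 0 then (if u = 0 then 0
                else P {ω | U m ((r : ℤ) + 1) ω = u - 1 ∧ S m ω = ((r : ℤ) + 1) + (d - 1)})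
              else P {ω | U m ((r : ℤ) + 1) ω = u ∧ S m ω = ((r : ℤ) + 1) + (d - 1)})
            + (if d = -1 then (if u = 0 then 0
                else P {ω | U m ((r : ℤ) + 1) ω = u - 1 ∧ S m ω = ((r : ℤ) + 1) + (d + 1)})
              else P {ω | U m ((r : ℤ) + 1) ω = u ∧ S m ω = ((r : ℤ) + 1) + (d + 1)})) * 2⁻¹ :=
        tsum_congr fun r => hstep m u ((r : ℤ) + 1) d
      rw [h1, ENNReal.tsum_mul_right, ENNReal.tsum_add]
      have hX : (∑' r : ℕ, (if d = 0 then (if u = 0 then 0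
            else P {ω | U m ((r : ℤ) + 1) ω = u - 1 ∧ S m ω = ((r : ℤ) + 1) + (d - 1)})
          else P {ω | U m ((r : ℤ) + 1) ω = u ∧ S m ω = ((r : ℤ) + 1) + (d - 1)}))
          = ((if d = 0 then (if u = 0 then 0 else myc m (u - 1) (d - 1))
              else myc m u (d - 1) : ℕ) : ENNReal) * 2⁻¹ ^ m := by
        by_cases hd0 : d = 0
        · by_cases hu0 : u = 0
          · simp only [if_pos hd0, if_pos hu0, tsum_zero, Nat.cast_zero, zero_mul]
          · simp only [if_pos hd0, if_neg hu0]
            exact ih (u - 1) (d - 1)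
        · simp only [if_neg hd0]
          exact ih u (d - 1)
      have hY : (∑' r : ℕ, (if d = -1 then (if u = 0 then 0
            else P {ω | U m ((r : ℤ) + 1) ω = u - 1 ∧ S m ω = ((r : ℤ) + 1) + (d + 1)})
          else P {ω | U m ((r : ℤ) + 1) ω = u ∧ S m ω = ((r : ℤ) + 1) + (d + 1)}))
          = ((if d = -1 then (if u = 0 then 0 else myc m (u - 1) (d + 1))
              else myc m u (d + 1) : ℕ) : ENNReal) * 2⁻¹ ^ m := by
        by_cases hd1 : d = -1
        · by_cases hu0 : u = 0
          · simp only [if_pos hd1, if_pos hu0, tsum_zero, Nat.cast_zero, zero_mul]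
          · simp only [if_pos hd1, if_neg hu0]
            exact ih (u - 1) (d + 1)
        · simp only [if_neg hd1]
          exact ih u (d + 1)
      rw [hX, hY, myc_rec' m u d]
      rw [Nat.cast_add]
      ring
  intro n hn u
  obtain ⟨m, rfl⟩ : ∃ m, n = m + 1 := ⟨n - 1, by omega⟩
  simp only [Nat.add_sub_cancel]
  have hpow : ∀ c : ℕ, (c : ENNReal) / 2 ^ (m + 1) = (c : ENNReal) * 2⁻¹ ^ m * 2⁻¹ := by
    intro c
    have h0 : (2 : ENNReal) ^ m ≠ 0 := pow_ne_zero _ (by norm_num)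
    have ht : (2 : ENNReal) ^ m ≠ ⊤ := ENNReal.pow_ne_top (by norm_num)
    rw [div_eq_mul_inv, pow_succ, ENNReal.mul_inv (Or.inl h0) (Or.inl ht),
      ENNReal.inv_pow, mul_assoc]
  constructor
  · -- V n = -1 part, corresponds to d = 0
    have hev : ∀ r : ℕ, {ω | U m ((r : ℤ) + 1) ω = u ∧ R (m + 1) ω = (r : ℤ) + 1
          ∧ V (m + 1) ω = -1}
        = {ω | U m ((r : ℤ) + 1) ω = u ∧ S m ω = ((r : ℤ) + 1) + 0}
          ∩ {ω | V (m + 1) ω = -1} := by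
      intro r
      ext ω
      simp only [Set.mem_setOf_eq, Set.mem_inter_iff]
      constructor
      · rintro ⟨h1, h2, h3⟩
        have := hRneg m ω h3
        exact ⟨⟨h1, by omega⟩, h3⟩
      · rintro ⟨⟨h1, h2⟩, h3⟩
        have := hRneg m ω h3
        exact ⟨h1, by omega, h3⟩
    have hsum : (∑' r : ℕ, P {ω | U m ((r : ℤ) + 1) ω = u ∧ R (m + 1) ω = (r : ℤ) + 1
          ∧ V (m + 1) ω = -1})
        = (myc m u 0 : ENNReal) * 2⁻¹ ^ m * 2⁻¹ := by
      have h2 : ∀ r : ℕ, P {ω | U m ((r : ℤ) + 1) ω = u ∧ R (m + 1) ω = (r : ℤ) + 1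
            ∧ V (m + 1) ω = -1}
          = P {ω | U m ((r : ℤ) + 1) ω = u ∧ S m ω = ((r : ℤ) + 1) + 0} * 2⁻¹ := by
        intro r
        rw [hev r, hsplit m u ((r : ℤ) + 1) (((r : ℤ) + 1) + 0) (-1), hVneg]
      rw [tsum_congr h2, ENNReal.tsum_mul_right, hkey m u 0]
    rw [hsum]
    by_cases he : Even u
    · rw [if_pos he]
      have h0 : myc m u 0 = 0 := by
        by_cases hu0 : u = 0
        · subst hu0
          exact myc_zero_nonneg m le_rfl
        · exact myc_even_nonneg m he le_rfl
      rw [h0]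
      norm_num
    · rw [if_neg he, hpow, myc_odd_nonneg m he le_rfl,
        (show (m + u + 1 + (0 : ℤ).toNat) / 2 = (m + 1 + u) / 2 by omega)]
  · -- V n = 1 part, corresponds to d = -1
    have hev : ∀ r : ℕ, {ω | U m ((r : ℤ) + 1) ω = u ∧ R (m + 1) ω = (r : ℤ) + 1
          ∧ V (m + 1) ω = 1}
        = {ω | U m ((r : ℤ) + 1) ω = u ∧ S m ω = ((r : ℤ) + 1) + (-1)}
          ∩ {ω | V (m + 1) ω = 1} := by
      intro r
      ext ω
      simp only [Set.mem_setOf_eq, Set.mem_inter_iff]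
      constructor
      · rintro ⟨h1, h2, h3⟩
        have := hRpos m ω h3
        exact ⟨⟨h1, by omega⟩, h3⟩
      · rintro ⟨⟨h1, h2⟩, h3⟩
        have := hRpos m ω h3
        exact ⟨h1, by omega, h3⟩
    have hsum : (∑' r : ℕ, P {ω | U m ((r : ℤ) + 1) ω = u ∧ R (m + 1) ω = (r : ℤ) + 1
          ∧ V (m + 1) ω = 1})
        = (myc m u (-1) : ENNReal) * 2⁻¹ ^ m * 2⁻¹ := by
      have h2 : ∀ r : ℕ, P {ω | U m ((r : ℤ) + 1) ω = u ∧ R (m + 1) ω = (r : ℤ) + 1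
            ∧ V (m + 1) ω = 1}
          = P {ω | U m ((r : ℤ) + 1) ω = u ∧ S m ω = ((r : ℤ) + 1) + (-1)} * 2⁻¹ := by
        intro r
        rw [hev r, hsplit m u ((r : ℤ) + 1) (((r : ℤ) + 1) + (-1)) 1, hVpos]
      rw [tsum_congr h2, ENNReal.tsum_mul_right, hkey m u (-1)]
    rw [hsum]
    by_cases he : Even u
    · rw [if_pos he, hpow]
      by_cases hu0 : u = 0
      · subst hu0
        rw [myc_zero_neg m (by norm_num : (-1 : ℤ) < 0),
          (show (-(-1 : ℤ)).toNat = 1 by norm_num), Finset.range_one, Finset.sum_singleton,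
          (show (m + 0 + 1) / 2 = (m + 1 + 0) / 2 by omega)]
      · rw [myc_even_neg m hu0 he (by norm_num : (-1 : ℤ) < 0),
          (show (m + u + (-(-1 : ℤ)).toNat) / 2 = (m + 1 + u) / 2 by omega)]
    · rw [if_neg he, myc_odd_neg m he (by norm_num : (-1 : ℤ) < 0)]
      norm_num
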